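/- Let h ≥ 1 be an integer, A > 0 and B real numbers, and let φ ∈ 𝒮(ℝ) be not identically zero with −φ''(t) + A t^(2h) φ(t) + B t^(h−1) φ(t) = 0 for all t ∈ ℝ. Then ∫ℝ t^(h−1) |φ(t)|² dt ≠ 0; more precisely B ≠ 0 and B · ∫ℝ t^(h−1) |φ(t)|² dt < 0. -/

import Mathlib

open MeasureTheory

lemma stmt11_aux_prod_int (f g : SchwartzMap ℝ ℂ) :
    Integrable (fun t : ℝ => (starRingEnd ℂ) (f t) * g t) := by
  obtain ⟨C, hC0, hC⟩ := f.decay 0 0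
  have hCf : ∀ t : ℝ, ‖f t‖ ≤ C := by
    intro t; have := hC t; simpa using this
  refine ((g.integrable (μ := volume)).norm.const_mul C).mono'
    (Continuous.aestronglyMeasurable ?_) (Filter.Eventually.of_forall fun t => ?_)
  · exact (Complex.continuous_conj.comp f.continuous).mul g.continuous
  · rw [norm_mul, RCLike.norm_conj]
    exact mul_le_mul_of_nonneg_right (hCf t) (norm_nonneg _)

lemma stmt11_aux_pow_int (φ : SchwartzMap ℝ ℂ) (k : ℕ) :
    Integrable (fun t : ℝ => t ^ k * ‖φ t‖ ^ 2) := by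
  obtain ⟨C, hC0, hC⟩ := φ.decay 0 0
  have hCf : ∀ t : ℝ, ‖φ t‖ ≤ C := by
    intro t; have := hC t; simpa using this
  refine ((φ.integrable_pow_mul volume k).const_mul C).mono'
    (Continuous.aestronglyMeasurable (by fun_prop)) (Filter.Eventually.of_forall fun t => ?_)
  have h1 : ‖t ^ k * ‖φ t‖ ^ 2‖ = |t| ^ k * ‖φ t‖ ^ 2 := by
    rw [Real.norm_eq_abs, abs_mul, abs_pow, abs_of_nonneg (by positivity : (0:ℝ) ≤ ‖φ t‖ ^ 2)]
  rw [h1, Real.norm_eq_abs]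
  have hb := hCf t
  have h2 : (0:ℝ) ≤ |t| ^ k := by positivity
  have h3 : (0:ℝ) ≤ ‖φ t‖ := norm_nonneg _
  have h4 : ‖φ t‖ ^ 2 ≤ C * ‖φ t‖ := by nlinarith
  calc |t| ^ k * ‖φ t‖ ^ 2 ≤ |t| ^ k * (C * ‖φ t‖) := mul_le_mul_of_nonneg_left h4 h2
    _ = C * (|t| ^ k * ‖φ t‖) := by ring

theorem stmt_11 (h : ℕ) (hh : 1 ≤ h) (A B : ℝ) (hA : 0 < A) (φ : SchwartzMap ℝ ℂ)
    (hφ0 : φ ≠ 0)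
    (hφ : ∀ t : ℝ, -(deriv (deriv (⇑φ)) t) + (A : ℂ) * (t : ℂ) ^ (2 * h) * φ t
      + (B : ℂ) * (t : ℂ) ^ (h - 1) * φ t = 0) :
    (∫ t : ℝ, t ^ (h - 1) * ‖φ t‖ ^ 2) ≠ 0 ∧ B ≠ 0 ∧
      B * (∫ t : ℝ, t ^ (h - 1) * ‖φ t‖ ^ 2) < 0 := by
  classical
  set ψ : SchwartzMap ℝ ℂ := SchwartzMap.derivCLM ℝ ℂ φ with hψdef
  set χ : SchwartzMap ℝ ℂ := SchwartzMap.derivCLM ℝ ℂ ψ with hχdef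
  have hψfun : deriv (⇑φ) = ⇑ψ := by
    funext t; exact (SchwartzMap.derivCLM_apply ℝ φ t).symm
  have hχfun : deriv (deriv (⇑φ)) = ⇑χ := by
    rw [hψfun]; funext t; exact (SchwartzMap.derivCLM_apply ℝ ψ t).symm
  -- the ODE in terms of χ
  have hODE : ∀ t : ℝ, (χ t : ℂ)
      = (A : ℂ) * (t : ℂ) ^ (2 * h) * φ t + (B : ℂ) * (t : ℂ) ^ (h - 1) * φ t := by
    intro t
    have := hφ t
    rw [hχfun] at this
    linear_combination -this
  -- derivatives
  have h1 : ∀ x : ℝ, HasDerivAt (⇑φ) (ψ x) x := by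
    intro x
    have hd : DifferentiableAt ℝ (⇑φ) x := ((φ.smooth 1).differentiable (by simp)).differentiableAt
    have h' := hd.hasDerivAt
    rwa [show deriv (⇑φ) x = ψ x from by rw [hψfun]] at h'
  have h2 : ∀ x : ℝ, HasDerivAt (⇑ψ) (χ x) x := by
    intro x
    have : DifferentiableAt ℝ (⇑ψ) x := ((ψ.smooth 1).differentiable (by simp)).differentiableAt
    have h' := this.hasDerivAt
    have : deriv (⇑ψ) x = χ x := (SchwartzMap.derivCLM_apply ℝ ψ x).symm
    rwa [this] at h'
  have hu : ∀ x : ℝ, HasDerivAt (fun t => (starRingEnd ℂ) (φ t)) ((starRingEnd ℂ) (ψ x)) x := by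
    intro x
    exact (h1 x).star
  -- integration by parts
  have hibp : (∫ t : ℝ, (starRingEnd ℂ) (φ t) * χ t)
      = - ∫ t : ℝ, (starRingEnd ℂ) (ψ t) * ψ t := by
    have := MeasureTheory.integral_mul_deriv_eq_deriv_mul_of_integrable
      (u := fun t => (starRingEnd ℂ) (φ t)) (v := ⇑ψ)
      (u' := fun t => (starRingEnd ℂ) (ψ t)) (v' := ⇑χ)
      (fun x _ => hu x) (fun x _ => h2 x) (stmt11_aux_prod_int φ χ) (stmt11_aux_prod_int ψ ψ) (stmt11_aux_prod_int φ ψ)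
    exact this
  -- rewrite LHS using the ODE
  have hL : (∫ t : ℝ, (starRingEnd ℂ) (φ t) * χ t)
      = ((A * ∫ t : ℝ, t ^ (2 * h) * ‖φ t‖ ^ 2) + B * ∫ t : ℝ, t ^ (h - 1) * ‖φ t‖ ^ 2 : ℝ) := by
    have hpt : ∀ t : ℝ, (starRingEnd ℂ) (φ t) * χ t
        = ((A * (t ^ (2 * h) * ‖φ t‖ ^ 2) + B * (t ^ (h - 1) * ‖φ t‖ ^ 2) : ℝ) : ℂ) := by
      intro t
      rw [hODE t]
      have hc : (starRingEnd ℂ) (φ t) * φ t = ((‖φ t‖ : ℝ) : ℂ) ^ 2 := RCLike.conj_mul (φ t)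
      push_cast
      linear_combination ((A : ℂ) * (t:ℂ) ^ (2*h) + (B:ℂ) * (t:ℂ)^(h-1)) * hc
    calc (∫ t : ℝ, (starRingEnd ℂ) (φ t) * χ t)
        = ∫ t : ℝ, ((A * (t ^ (2 * h) * ‖φ t‖ ^ 2) + B * (t ^ (h - 1) * ‖φ t‖ ^ 2) : ℝ) : ℂ) := by
          exact integral_congr_ae (Filter.Eventually.of_forall hpt)
      _ = ((∫ t : ℝ, (A * (t ^ (2 * h) * ‖φ t‖ ^ 2) + B * (t ^ (h - 1) * ‖φ t‖ ^ 2)) : ℝ) : ℂ) :=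
          integral_ofReal
      _ = ((A * ∫ t : ℝ, t ^ (2 * h) * ‖φ t‖ ^ 2) + B * ∫ t : ℝ, t ^ (h - 1) * ‖φ t‖ ^ 2 : ℝ) := by
          rw [integral_add ((stmt11_aux_pow_int φ (2*h)).const_mul A)
            ((stmt11_aux_pow_int φ (h-1)).const_mul B)]
          norm_cast
          rw [integral_const_mul, integral_const_mul]
  -- rewrite RHS
  have hR : (∫ t : ℝ, (starRingEnd ℂ) (ψ t) * ψ t) = ((∫ t : ℝ, ‖ψ t‖ ^ 2 : ℝ) : ℂ) := by
    calc (∫ t : ℝ, (starRingEnd ℂ) (ψ t) * ψ t)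
        = ∫ t : ℝ, ((‖ψ t‖ ^ 2 : ℝ) : ℂ) := by
          refine integral_congr_ae (Filter.Eventually.of_forall fun t => ?_)
          show (starRingEnd ℂ) (ψ t) * ψ t = ((‖ψ t‖ ^ 2 : ℝ) : ℂ)
          rw [RCLike.conj_mul (ψ t)]; norm_cast
      _ = ((∫ t : ℝ, ‖ψ t‖ ^ 2 : ℝ) : ℂ) := integral_ofReal
  set E1 : ℝ := ∫ t : ℝ, ‖ψ t‖ ^ 2 with hE1
  set E2 : ℝ := ∫ t : ℝ, t ^ (2 * h) * ‖φ t‖ ^ 2 with hE2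
  set I : ℝ := ∫ t : ℝ, t ^ (h - 1) * ‖φ t‖ ^ 2 with hI
  have key : A * E2 + B * I = -E1 := by
    have : ((A * E2 + B * I : ℝ) : ℂ) = ((-E1 : ℝ) : ℂ) := by
      rw [← hL]
      push_cast
      rw [hibp, hR]
    exact_mod_cast this
  have hE1nn : 0 ≤ E1 := integral_nonneg fun t => by positivity
  -- E2 > 0
  have hE2pos : 0 < E2 := by
    have hnn : ∀ t : ℝ, 0 ≤ t ^ (2 * h) * ‖φ t‖ ^ 2 := by
      intro t
      have : (0:ℝ) ≤ t ^ (2 * h) := by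
        rw [pow_mul]; positivity
      positivity
    rw [hE2, integral_pos_iff_support_of_nonneg hnn (stmt11_aux_pow_int φ (2*h))]
    have hsupp : Function.support (fun t : ℝ => t ^ (2 * h) * ‖φ t‖ ^ 2)
        = {t : ℝ | φ t ≠ 0} \ {0} := by
      ext t
      simp only [Function.mem_support, Set.mem_diff, Set.mem_setOf_eq, Set.mem_singleton_iff]
      constructor
      · intro ht
        constructor
        · intro h0; apply ht; simp [h0]
        · intro h0; apply ht; subst h0; simp [zero_pow (by omega : 2 * h ≠ 0)]
      · rintro ⟨h1', h2'⟩
        have : t ^ (2 * h) ≠ 0 := pow_ne_zero _ h2'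
        have : ‖φ t‖ ≠ 0 := norm_ne_zero_iff.mpr h1'
        positivity
    rw [hsupp]
    have hSopen : IsOpen {t : ℝ | φ t ≠ 0} :=
      isOpen_compl_singleton.preimage φ.continuous
    have hSne : {t : ℝ | φ t ≠ 0}.Nonempty := by
      by_contra hc
      apply hφ0
      ext t
      have := Set.not_nonempty_iff_eq_empty.mp hc
      have ht : φ t = 0 := by
        by_contra h'
        exact absurd (Set.eq_empty_iff_forall_notMem.mp this t) (fun h'' => h'' h')
      simpa using ht
    have hvol : 0 < volume ({t : ℝ | φ t ≠ 0} \ {0}) := by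
      rw [measure_diff_null (measure_singleton 0)]
      exact hSopen.measure_pos volume hSne
    exact hvol
  have hBI : B * I < 0 := by nlinarith
  refine ⟨?_, ?_, hBI⟩
  · intro hI0; rw [hI0, mul_zero] at hBI; exact lt_irrefl _ hBI
  · intro hB0; rw [hB0, zero_mul] at hBI; exact lt_irrefl _ hBI
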